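/- Let I ⊆ ℝ be an interval and let M, a : I → ℝ be differentiable functions with M(t) > 0 and 0 < a(t)² < M(t)² for all t. Define r₁(t) = M(t) + √(M(t)² − a(t)²) and the irreducible mass by M_irr(t)² = ½ (M(t)² + √(M(t)⁴ − (a(t)M(t))²)). Assume a(t) > 0 and that at every t the Christodoulou inequality holds: (d/dt)(a(t)M(t)) ≤ ((r₁(t)² + a(t)²)/a(t)) · M'(t). Then t ↦ M_irr(t)² is nondecreasing on I; consequently, since M(t)² ≥ M_irr(t)² always, one has M(t) ≥ M_irr(t) ≥ M_irr(t₀) for all t ≥ t₀ in I: the mass of the black hole can never be reduced below its initial irreducible mass. -/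

import Mathlib

/-- **Irreducibility of the irreducible mass (Christodoulou).**
Let `I ⊆ ℝ` be an interval and `M, a : I → ℝ` differentiable with `M > 0`,
`0 < a² < M²` and `a > 0` on `I`. Define `r₁ = M + √(M² − a²)` and the irreducible
mass by `M_irr² = ½(M² + √(M⁴ − (aM)²))`. If the Christodoulou inequality
`(d/dt)(aM) ≤ ((r₁² + a²)/a)·M'` holds on `I`, then `t ↦ M_irr(t)²` is
nondecreasing on `I`, and consequently `M(t) ≥ M_irr(t) ≥ M_irr(t₀)` for all
`t ≥ t₀` in `I`: the mass can never be reduced below its initial irreducible mass. -/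
theorem irreducible_mass_nondecreasing (I : Set ℝ) (hI : I.OrdConnected)
    (M a M' a' : ℝ → ℝ)
    (hM : ∀ t ∈ I, HasDerivAt M (M' t) t)
    (ha : ∀ t ∈ I, HasDerivAt a (a' t) t)
    (hMpos : ∀ t ∈ I, 0 < M t)
    (hbound : ∀ t ∈ I, 0 < (a t) ^ 2 ∧ (a t) ^ 2 < (M t) ^ 2)
    (hapos : ∀ t ∈ I, 0 < a t)
    (hChristodoulou : ∀ t ∈ I,
      a' t * M t + a t * M' t ≤
        (((M t + Real.sqrt ((M t) ^ 2 - (a t) ^ 2)) ^ 2 + (a t) ^ 2) / a t) * M' t) :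
    MonotoneOn
        (fun t => (1 / 2) * ((M t) ^ 2 + Real.sqrt ((M t) ^ 4 - (a t * M t) ^ 2))) I
    ∧ ∀ t₀ ∈ I, ∀ t ∈ I, t₀ ≤ t →
        Real.sqrt ((1 / 2) * ((M t₀) ^ 2 + Real.sqrt ((M t₀) ^ 4 - (a t₀ * M t₀) ^ 2)))
            ≤ Real.sqrt ((1 / 2) * ((M t) ^ 2 + Real.sqrt ((M t) ^ 4 - (a t * M t) ^ 2)))
        ∧ Real.sqrt ((1 / 2) * ((M t) ^ 2 + Real.sqrt ((M t) ^ 4 - (a t * M t) ^ 2)))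
            ≤ M t := by
  set f : ℝ → ℝ :=
    fun t => (1 / 2) * ((M t) ^ 2 + Real.sqrt ((M t) ^ 4 - (a t * M t) ^ 2)) with hf
  -- Key: at every point of `I` the function has a nonnegative derivative.
  have key : ∀ t ∈ I, ∃ d, HasDerivAt f d t ∧ 0 ≤ d := by
    intro t ht
    have hm := hMpos t ht
    have hap := hapos t ht
    obtain ⟨hb1, hb2⟩ := hbound t ht
    have hGpos : 0 < (M t) ^ 4 - (a t * M t) ^ 2 := by nlinarith
    -- derivative of the inside of the square root
    have hM4 : HasDerivAt (fun t => (M t) ^ 4) (4 * (M t) ^ 3 * M' t) t := by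
      simpa using (hM t ht).fun_pow 4
    have haM : HasDerivAt (fun t => a t * M t) (a' t * M t + a t * M' t) t :=
      (ha t ht).mul (hM t ht)
    have haM2 : HasDerivAt (fun t => (a t * M t) ^ 2)
        (2 * (a t * M t) * (a' t * M t + a t * M' t)) t := by
      simpa [mul_comm, mul_assoc] using haM.fun_pow 2
    have hG : HasDerivAt (fun t => (M t) ^ 4 - (a t * M t) ^ 2)
        (4 * (M t) ^ 3 * M' t - 2 * (a t * M t) * (a' t * M t + a t * M' t)) t :=
      hM4.sub haM2
    have hSqrt := hG.sqrt (ne_of_gt hGpos)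
    have hM2 : HasDerivAt (fun t => (M t) ^ 2) (2 * M t * M' t) t := by
      simpa using (hM t ht).fun_pow 2
    have hfd : HasDerivAt f
        ((1 / 2) * (2 * M t * M' t +
          (4 * (M t) ^ 3 * M' t - 2 * (a t * M t) * (a' t * M t + a t * M' t)) /
            (2 * Real.sqrt ((M t) ^ 4 - (a t * M t) ^ 2)))) t :=
      (hM2.add hSqrt).const_mul (1 / 2)
    refine ⟨_, hfd, ?_⟩
    -- abbreviations
    set m := M t
    set α := a t
    set s := Real.sqrt (m ^ 2 - α ^ 2) with hs
    have hs2 : s ^ 2 = m ^ 2 - α ^ 2 := Real.sq_sqrt (by nlinarith)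
    have hspos : 0 < s := Real.sqrt_pos.2 (by nlinarith)
    have hGs : Real.sqrt (m ^ 4 - (α * m) ^ 2) = m * s := by
      rw [show m ^ 4 - (α * m) ^ 2 = (m * s) ^ 2 by nlinarith]
      exact Real.sqrt_sq (by positivity)
    rw [hGs]
    -- Christodoulou inequality, multiplied through by `α > 0`
    have hC := hChristodoulou t ht
    rw [div_mul_eq_mul_div, le_div_iff₀ hap] at hC
    have hCs : (a' t * m + α * M' t) * α ≤ ((m + s) ^ 2 + α ^ 2) * M' t := hC
    have hexp : (m + s) ^ 2 + α ^ 2 = 2 * m ^ 2 + 2 * m * s := by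
      linear_combination hs2
    rw [hexp] at hCs
    have hC' : α * (a' t * m + α * M' t) ≤ (2 * m ^ 2 + 2 * m * s) * M' t := by
      linarith [hCs]
    have hden : (0:ℝ) < 2 * (m * s) := by positivity
    have hq : -(2 * m * M' t) * (2 * (m * s)) ≤
        4 * m ^ 3 * M' t - 2 * (α * m) * (a' t * m + α * M' t) := by
      nlinarith [mul_le_mul_of_nonneg_left hC' (le_of_lt hm)]
    have := (le_div_iff₀ hden).2 hq
    linarith
  have hconv : Convex ℝ I := hI.convex
  have mono : MonotoneOn f I := by
    apply monotoneOn_of_deriv_nonneg hconv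
    · intro t ht
      obtain ⟨d, hd, _⟩ := key t ht
      exact hd.continuousAt.continuousWithinAt
    · intro t ht
      obtain ⟨d, hd, _⟩ := key t (interior_subset ht)
      exact hd.differentiableAt.differentiableWithinAt
    · intro t ht
      obtain ⟨d, hd, hd0⟩ := key t (interior_subset ht)
      rw [hd.deriv]; exact hd0
  refine ⟨mono, fun t₀ ht₀ t ht hle => ⟨Real.sqrt_le_sqrt (mono ht₀ ht hle), ?_⟩⟩
  have hm := hMpos t ht
  obtain ⟨hb1, hb2⟩ := hbound t ht
  have hle2 : (1 / 2) * ((M t) ^ 2 + Real.sqrt ((M t) ^ 4 - (a t * M t) ^ 2)) ≤ (M t) ^ 2 := by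
    have h1 : Real.sqrt ((M t) ^ 4 - (a t * M t) ^ 2) ≤ (M t) ^ 2 := by
      rw [show (M t) ^ 2 = Real.sqrt (((M t) ^ 2) ^ 2) from (Real.sqrt_sq (by positivity)).symm]
      apply Real.sqrt_le_sqrt; nlinarith
    linarith
  calc Real.sqrt ((1 / 2) * ((M t) ^ 2 + Real.sqrt ((M t) ^ 4 - (a t * M t) ^ 2)))
      ≤ Real.sqrt ((M t) ^ 2) := Real.sqrt_le_sqrt hle2
    _ = M t := Real.sqrt_sq hm.le
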